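/- Under the normal–normal data-generating distribution with the straPP transformation assumption β₀ = (σ₀/σ₁)β₁, the bias of the power-prior posterior-mean estimator is a fixed linear function of β₁: E[β̂_p] − β₁ = (Σ_p((1/σ₁²)X₁ᵀX₁ + (a₀/(σ₀σ₁))X₀ᵀX₀) − I)β₁, where I is the p×p identity matrix. -/

import Mathlib

open MeasureTheory ProbabilityTheory Matrix

noncomputable section

section AuxPP
open Real
open scoped NNReal


lemma integrable_mul_exp_sq {b : ℝ} (hb : 0 < b) :
    Integrable (fun y : ℝ => y * rexp (-b * y ^ 2)) := by
  have := integrable_rpow_mul_exp_neg_mul_sq hb (s := 1) (by norm_num)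
  simpa using this

lemma integral_mul_exp_sq {b : ℝ} (hb : 0 < b) :
    ∫ y : ℝ, y * rexp (-b * y ^ 2) = 0 := by
  have h := integral_neg_eq_self (fun y : ℝ => y * rexp (-b * y ^ 2)) volume
  simp only [neg_mul, neg_sq] at h
  have : ∫ y : ℝ, -(y * rexp (-b * y ^ 2)) = ∫ y : ℝ, y * rexp (-b * y ^ 2) := by
    simpa [neg_mul] using h
  rw [integral_neg] at this
  linarith

lemma integrable_mul_gaussianPDFReal (m : ℝ) {v : ℝ≥0} (hv : v ≠ 0) :
    Integrable (fun x : ℝ => x * gaussianPDFReal m v x) := by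
  have hv0 : (0:ℝ) < v := by exact_mod_cast pos_iff_ne_zero.mpr hv
  have hb : 0 < (2 * (v : ℝ))⁻¹ := by positivity
  have hg : Integrable (fun y : ℝ =>
      (√(2 * π * v))⁻¹ * (y * rexp (-(2 * (v:ℝ))⁻¹ * y ^ 2))
        + ((√(2 * π * v))⁻¹ * m) * rexp (-(2 * (v:ℝ))⁻¹ * y ^ 2)) :=
    ((integrable_mul_exp_sq hb).const_mul _).add
      ((integrable_exp_neg_mul_sq hb).const_mul _)
  have := hg.comp_sub_right m
  refine this.congr (Filter.Eventually.of_forall fun x => ?_)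
  have hv' : (0:ℝ) < v := by positivity
  simp only [gaussianPDFReal]
  rw [show -(x - m) ^ 2 / (2 * (v:ℝ)) = -(2 * (v:ℝ))⁻¹ * (x - m) ^ 2 by
    field_simp]
  ring

section
open scoped ENNReal

lemma integral_mul_gaussianPDFReal (m : ℝ) {v : ℝ≥0} (hv : v ≠ 0) :
    ∫ x : ℝ, x * gaussianPDFReal m v x = m := by
  have hv0 : (0:ℝ) < v := by exact_mod_cast pos_iff_ne_zero.mpr hv
  have hb : 0 < (2 * (v : ℝ))⁻¹ := by positivity
  have hkey : ∀ x : ℝ, x * gaussianPDFReal m v x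
      = (fun y => (y + m) * gaussianPDFReal 0 v y) (x - m) := by
    intro x
    simp only [gaussianPDFReal]
    ring_nf
  calc ∫ x : ℝ, x * gaussianPDFReal m v x
      = ∫ x : ℝ, (fun y => (y + m) * gaussianPDFReal 0 v y) (x - m) := by
        simp_rw [hkey]
    _ = ∫ y : ℝ, (y + m) * gaussianPDFReal 0 v y :=
        integral_sub_right_eq_self (μ := volume) (fun y => (y + m) * gaussianPDFReal 0 v y) m
    _ = (∫ y : ℝ, y * gaussianPDFReal 0 v y) + ∫ y : ℝ, m * gaussianPDFReal 0 v y := by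
        rw [← integral_add (integrable_mul_gaussianPDFReal 0 hv)
          ((integrable_gaussianPDFReal 0 v).const_mul m)]
        congr 1; ext y; ring
    _ = m := by
        have h1 : ∫ y : ℝ, y * gaussianPDFReal 0 v y = 0 := by
          have : ∀ y : ℝ, y * gaussianPDFReal 0 v y
              = (√(2 * π * v))⁻¹ * (y * rexp (-(2 * (v:ℝ))⁻¹ * y ^ 2)) := by
            intro y
            simp only [gaussianPDFReal]
            rw [show -(y - 0) ^ 2 / (2 * (v:ℝ)) = -(2 * (v:ℝ))⁻¹ * y ^ 2 by field_simp; ring]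
            ring
          simp_rw [this, integral_const_mul, integral_mul_exp_sq hb, mul_zero]
        rw [h1, integral_const_mul, integral_gaussianPDFReal_eq_one 0 hv, zero_add, mul_one]

lemma integrable_id_gaussianReal (m : ℝ) (v : ℝ≥0) :
    Integrable (fun x : ℝ => x) (gaussianReal m v) := by
  by_cases hv : v = 0
  · subst hv
    simp only [gaussianReal_zero_var]
    exact (integrable_const m).congr (ae_eq_dirac (fun x : ℝ => x)).symm
  · rw [gaussianReal_of_var_ne_zero _ hv]
    rw [integrable_withDensity_iff (measurable_gaussianPDF m v)
      (Filter.Eventually.of_forall fun x => ENNReal.ofReal_lt_top)]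
    refine (integrable_mul_gaussianPDFReal m hv).congr
      (Filter.Eventually.of_forall fun x => ?_)
    simp only [gaussianPDF, ENNReal.toReal_ofReal (gaussianPDFReal_nonneg m v x)]

lemma integral_id_gaussianReal (m : ℝ) (v : ℝ≥0) :
    ∫ x, x ∂(gaussianReal m v) = m := by
  by_cases hv : v = 0
  · subst hv; simp
  · rw [gaussianReal_of_var_ne_zero _ hv]
    have : (gaussianPDF m v) = fun x => ((gaussianPDFReal m v x).toNNReal : ℝ≥0∞) := rfl
    rw [this, integral_withDensity_eq_integral_smul
      ((measurable_gaussianPDFReal m v).real_toNNReal) (fun x => x)]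
    have heq : (fun x : ℝ => (gaussianPDFReal m v x).toNNReal • x)
        = fun x : ℝ => x * gaussianPDFReal m v x := by
      ext x
      rw [NNReal.smul_def, smul_eq_mul, Real.coe_toNNReal _ (gaussianPDFReal_nonneg _ _ _)]
      ring
    rw [heq, integral_mul_gaussianPDFReal m hv]

end



lemma pi_map_eval {ι : Type*} [Fintype ι] [DecidableEq ι] (ν : ι → Measure ℝ)
    [∀ i, IsProbabilityMeasure (ν i)] (i : ι) :
    (Measure.pi ν).map (Function.eval i) = ν i := by
  ext s hs
  rw [Measure.map_apply (measurable_pi_apply i) hs]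
  have hpre : Function.eval i ⁻¹' s
      = Set.pi Set.univ (Function.update (fun _ => (Set.univ : Set ℝ)) i s) := by
    ext x
    simp only [Set.mem_preimage, Set.mem_pi, Set.mem_univ, forall_true_left]
    constructor
    · intro hx j
      rcases eq_or_ne j i with rfl | hj
      · simpa using hx
      · simp [Function.update_of_ne hj]
    · intro hx
      simpa using hx i
  rw [hpre, Measure.pi_pi]
  rw [Fintype.prod_eq_single i (fun j hj => by simp [Function.update_of_ne hj])]
  simp

lemma integral_eval_pi {ι : Type*} [Fintype ι] [DecidableEq ι] (ν : ι → Measure ℝ)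
    [∀ i, IsProbabilityMeasure (ν i)] (i : ι) :
    ∫ x, x i ∂(Measure.pi ν) = ∫ t, t ∂(ν i) := by
  conv_rhs => rw [← pi_map_eval ν i]
  exact (integral_map (φ := (Function.eval i : (ι → ℝ) → ℝ)) (f := fun t : ℝ => t)
    (measurable_pi_apply i).aemeasurable aestronglyMeasurable_id).symm

lemma integrable_eval_pi {ι : Type*} [Fintype ι] [DecidableEq ι] (ν : ι → Measure ℝ)
    [∀ i, IsProbabilityMeasure (ν i)] (i : ι)
    (h : Integrable (fun t : ℝ => t) (ν i)) :
    Integrable (fun x : ι → ℝ => x i) (Measure.pi ν) := by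
  rw [← pi_map_eval ν i] at h
  exact (integrable_map_measure h.aestronglyMeasurable
    (measurable_pi_apply i).aemeasurable).mp h



lemma integrable_fst_coord {α β : Type*} [MeasurableSpace α] [MeasurableSpace β]
    (μ₀ : Measure α) (μ₁ : Measure β) [IsProbabilityMeasure μ₀] [IsProbabilityMeasure μ₁]
    {f : α → ℝ} (h : Integrable f μ₀) :
    Integrable (fun y : α × β => f y.1) (μ₀.prod μ₁) := by
  have hmap : (μ₀.prod μ₁).map Prod.fst = μ₀ := by
    rw [Measure.map_fst_prod]; simp
  rw [← hmap] at h
  exact (integrable_map_measure h.aestronglyMeasurable measurable_fst.aemeasurable).mp h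

lemma integrable_snd_coord {α β : Type*} [MeasurableSpace α] [MeasurableSpace β]
    (μ₀ : Measure α) (μ₁ : Measure β) [IsProbabilityMeasure μ₀] [IsProbabilityMeasure μ₁]
    {f : β → ℝ} (h : Integrable f μ₁) :
    Integrable (fun y : α × β => f y.2) (μ₀.prod μ₁) := by
  have hmap : (μ₀.prod μ₁).map Prod.snd = μ₁ := by
    rw [Measure.map_snd_prod]; simp
  rw [← hmap] at h
  exact (integrable_map_measure h.aestronglyMeasurable measurable_snd.aemeasurable).mp h

lemma integral_fst_coord {α β : Type*} [MeasurableSpace α] [MeasurableSpace β]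
    (μ₀ : Measure α) (μ₁ : Measure β) [IsProbabilityMeasure μ₀] [IsProbabilityMeasure μ₁]
    {f : α → ℝ} (hf : AEStronglyMeasurable f μ₀) :
    ∫ y : α × β, f y.1 ∂(μ₀.prod μ₁) = ∫ x, f x ∂μ₀ := by
  have hmap : (μ₀.prod μ₁).map Prod.fst = μ₀ := by
    rw [Measure.map_fst_prod]; simp
  conv_rhs => rw [← hmap]
  rw [← hmap] at hf
  exact (integral_map measurable_fst.aemeasurable hf).symm

lemma integral_snd_coord {α β : Type*} [MeasurableSpace α] [MeasurableSpace β]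
    (μ₀ : Measure α) (μ₁ : Measure β) [IsProbabilityMeasure μ₀] [IsProbabilityMeasure μ₁]
    {f : β → ℝ} (hf : AEStronglyMeasurable f μ₁) :
    ∫ y : α × β, f y.2 ∂(μ₀.prod μ₁) = ∫ x, f x ∂μ₁ := by
  have hmap : (μ₀.prod μ₁).map Prod.snd = μ₁ := by
    rw [Measure.map_snd_prod]; simp
  conv_rhs => rw [← hmap]
  rw [← hmap] at hf
  exact (integral_map measurable_snd.aemeasurable hf).symm


end AuxPP


/-- The normal–normal data-generating distribution: the product probability measure on
`(Fin n₀ → ℝ) × (Fin n₁ → ℝ)` under which the components `Y₀ i ~ N((X₀ β₀) i, σ₀²)` and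
`Y₁ i ~ N((X₁ β₁) i, σ₁²)` are all independent. -/
def dataMeasure {n₀ n₁ p : ℕ} (X₀ : Matrix (Fin n₀) (Fin p) ℝ)
    (X₁ : Matrix (Fin n₁) (Fin p) ℝ) (σ₀ σ₁ : ℝ) (β₀ β₁ : Fin p → ℝ) :
    Measure ((Fin n₀ → ℝ) × (Fin n₁ → ℝ)) :=
  (Measure.pi fun i => gaussianReal (X₀.mulVec β₀ i) ((σ₀ ^ 2).toNNReal)).prod
    (Measure.pi fun i => gaussianReal (X₁.mulVec β₁ i) ((σ₁ ^ 2).toNNReal))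

/-- The straPP posterior-mean estimator
`β̂_s = Σ_s((1/σ₁²)X₁ᵀY₁ + (a₀/(σ₀σ₁))X₀ᵀY₀)` with `Σ_s = σ₁²(X₁ᵀX₁ + a₀X₀ᵀX₀)⁻¹`. -/
def strapEst {n₀ n₁ p : ℕ} (X₀ : Matrix (Fin n₀) (Fin p) ℝ)
    (X₁ : Matrix (Fin n₁) (Fin p) ℝ) (σ₀ σ₁ a₀ : ℝ)
    (y : (Fin n₀ → ℝ) × (Fin n₁ → ℝ)) : Fin p → ℝ :=
  (σ₁ ^ 2 • (X₁ᵀ * X₁ + a₀ • (X₀ᵀ * X₀))⁻¹).mulVec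
    ((1 / σ₁ ^ 2) • X₁ᵀ.mulVec y.2 + (a₀ / (σ₀ * σ₁)) • X₀ᵀ.mulVec y.1)

/-- The power-prior posterior-mean estimator
`β̂_p = Σ_p((1/σ₁²)X₁ᵀY₁ + (a₀/σ₀²)X₀ᵀY₀)` with
`Σ_p = ((1/σ₁²)X₁ᵀX₁ + (a₀/σ₀²)X₀ᵀX₀)⁻¹`. -/
def ppEst {n₀ n₁ p : ℕ} (X₀ : Matrix (Fin n₀) (Fin p) ℝ)
    (X₁ : Matrix (Fin n₁) (Fin p) ℝ) (σ₀ σ₁ a₀ : ℝ)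
    (y : (Fin n₀ → ℝ) × (Fin n₁ → ℝ)) : Fin p → ℝ :=
  ((1 / σ₁ ^ 2) • (X₁ᵀ * X₁) + (a₀ / σ₀ ^ 2) • (X₀ᵀ * X₀))⁻¹.mulVec
    ((1 / σ₁ ^ 2) • X₁ᵀ.mulVec y.2 + (a₀ / σ₀ ^ 2) • X₀ᵀ.mulVec y.1)

/-- Under the normal–normal data-generating distribution with the straPP transformation
assumption `β₀ = (σ₀/σ₁)β₁`, the bias of the power-prior posterior-mean estimator is the
fixed linear function of `β₁`:
`E[β̂_p] − β₁ = (Σ_p((1/σ₁²)X₁ᵀX₁ + (a₀/(σ₀σ₁))X₀ᵀX₀) − I)β₁`. -/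
theorem pp_estimator_bias {n₀ n₁ p : ℕ}
    (X₀ : Matrix (Fin n₀) (Fin p) ℝ) (X₁ : Matrix (Fin n₁) (Fin p) ℝ)
    (σ₀ σ₁ a₀ : ℝ) (hσ₀ : 0 < σ₀) (hσ₁ : 0 < σ₁) (ha₀ : 0 < a₀) (ha₀' : a₀ ≤ 1)
    (hp : IsUnit ((1 / σ₁ ^ 2) • (X₁ᵀ * X₁) + (a₀ / σ₀ ^ 2) • (X₀ᵀ * X₀)).det)
    (β₁ : Fin p → ℝ)
    (μ : Measure ((Fin n₀ → ℝ) × (Fin n₁ → ℝ)))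
    (hμ : μ = dataMeasure X₀ X₁ σ₀ σ₁ ((σ₀ / σ₁) • β₁) β₁) :
    ∀ j : Fin p,
      ∫ y, ppEst X₀ X₁ σ₀ σ₁ a₀ y j ∂μ - β₁ j
        = ((((1 / σ₁ ^ 2) • (X₁ᵀ * X₁) + (a₀ / σ₀ ^ 2) • (X₀ᵀ * X₀))⁻¹
            * ((1 / σ₁ ^ 2) • (X₁ᵀ * X₁) + (a₀ / (σ₀ * σ₁)) • (X₀ᵀ * X₀))
            - 1).mulVec β₁) j := by
  intro j
  subst hμ
  simp only [dataMeasure]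
  set ν₀ := fun i : Fin n₀ => gaussianReal (X₀.mulVec ((σ₀ / σ₁) • β₁) i) ((σ₀ ^ 2).toNNReal)
    with hν₀
  set ν₁ := fun i : Fin n₁ => gaussianReal (X₁.mulVec β₁ i) ((σ₁ ^ 2).toNNReal) with hν₁
  set μ' := (Measure.pi ν₀).prod (Measure.pi ν₁) with hμ'
  set S : Matrix (Fin p) (Fin p) ℝ :=
    (1 / σ₁ ^ 2) • (X₁ᵀ * X₁) + (a₀ / σ₀ ^ 2) • (X₀ᵀ * X₀) with hS
  have int₀ : ∀ i : Fin n₀, Integrable (fun y : (Fin n₀ → ℝ) × (Fin n₁ → ℝ) => y.1 i) μ' :=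
    fun i => integrable_fst_coord _ _
      (integrable_eval_pi ν₀ i (integrable_id_gaussianReal _ _))
  have int₁ : ∀ i : Fin n₁, Integrable (fun y : (Fin n₀ → ℝ) × (Fin n₁ → ℝ) => y.2 i) μ' :=
    fun i => integrable_snd_coord _ _
      (integrable_eval_pi ν₁ i (integrable_id_gaussianReal _ _))
  have m₀ : ∀ i : Fin n₀, ∫ y, y.1 i ∂μ' = X₀.mulVec ((σ₀ / σ₁) • β₁) i := fun i => by
    have h1 := integral_fst_coord (Measure.pi ν₀) (Measure.pi ν₁)
      (f := fun x : Fin n₀ → ℝ => x i) (measurable_pi_apply i).aestronglyMeasurable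
    have h2 := integral_eval_pi ν₀ i
    have h3 : ∫ t, t ∂(ν₀ i) = X₀.mulVec ((σ₀ / σ₁) • β₁) i := integral_id_gaussianReal _ _
    exact h1.trans (h2.trans h3)
  have m₁ : ∀ i : Fin n₁, ∫ y, y.2 i ∂μ' = X₁.mulVec β₁ i := fun i => by
    have h1 := integral_snd_coord (Measure.pi ν₀) (Measure.pi ν₁)
      (f := fun x : Fin n₁ → ℝ => x i) (measurable_pi_apply i).aestronglyMeasurable
    have h2 := integral_eval_pi ν₁ i
    have h3 : ∫ t, t ∂(ν₁ i) = X₁.mulVec β₁ i := integral_id_gaussianReal _ _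
    exact h1.trans (h2.trans h3)
  have hexp : ∀ y : (Fin n₀ → ℝ) × (Fin n₁ → ℝ), ppEst X₀ X₁ σ₀ σ₁ a₀ y j
      = (∑ k, ((1 / σ₁ ^ 2) * (S⁻¹ * X₁ᵀ) j k) * y.2 k)
        + ∑ k, ((a₀ / σ₀ ^ 2) * (S⁻¹ * X₀ᵀ) j k) * y.1 k := by
    intro y
    rw [ppEst, ← hS]
    simp only [mulVec_add, mulVec_smul, mulVec_mulVec, Pi.add_apply, Pi.smul_apply,
      smul_eq_mul, mulVec, dotProduct, Matrix.mul_apply, Finset.mul_sum, Finset.sum_mul,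
      mul_add, Finset.sum_add_distrib]
    refine congrArg₂ (· + ·) ?_ ?_ <;> rw [Finset.sum_comm] <;>
      exact Finset.sum_congr rfl fun a _ => Finset.sum_congr rfl fun b _ => by ring
  have hI : ∫ y, ppEst X₀ X₁ σ₀ σ₁ a₀ y j ∂μ'
      = (∑ k, ((1 / σ₁ ^ 2) * (S⁻¹ * X₁ᵀ) j k) * (X₁.mulVec β₁ k))
        + ∑ k, ((a₀ / σ₀ ^ 2) * (S⁻¹ * X₀ᵀ) j k) * (X₀.mulVec ((σ₀ / σ₁) • β₁) k) := by
    simp_rw [hexp]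
    rw [integral_add (integrable_finset_sum _ fun k _ => (int₁ k).const_mul _)
      (integrable_finset_sum _ fun k _ => (int₀ k).const_mul _),
      integral_finset_sum _ (fun k _ => (int₁ k).const_mul _),
      integral_finset_sum _ (fun k _ => (int₀ k).const_mul _)]
    congr 1
    · exact Finset.sum_congr rfl fun k _ => by rw [integral_const_mul, m₁ k]
    · exact Finset.sum_congr rfl fun k _ => by rw [integral_const_mul, m₀ k]
  have eA : (∑ k, ((1 / σ₁ ^ 2) * (S⁻¹ * X₁ᵀ) j k) * (X₁.mulVec β₁ k))
      = (((1 / σ₁ ^ 2) • (S⁻¹ * X₁ᵀ)).mulVec (X₁.mulVec β₁)) j := by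
    simp [mulVec, dotProduct, Pi.smul_apply, smul_eq_mul]
  have eB : (∑ k, ((a₀ / σ₀ ^ 2) * (S⁻¹ * X₀ᵀ) j k) * (X₀.mulVec ((σ₀ / σ₁) • β₁) k))
      = (((a₀ / σ₀ ^ 2) • (S⁻¹ * X₀ᵀ)).mulVec (X₀.mulVec ((σ₀ / σ₁) • β₁))) j := by
    simp [mulVec, dotProduct, Pi.smul_apply, smul_eq_mul]
  have key : ((1 / σ₁ ^ 2) • (S⁻¹ * X₁ᵀ)).mulVec (X₁.mulVec β₁)
      + ((a₀ / σ₀ ^ 2) • (S⁻¹ * X₀ᵀ)).mulVec (X₀.mulVec ((σ₀ / σ₁) • β₁))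
      = (S⁻¹ * ((1 / σ₁ ^ 2) • (X₁ᵀ * X₁) + (a₀ / (σ₀ * σ₁)) • (X₀ᵀ * X₀))).mulVec β₁ := by
    simp only [mulVec_mulVec, Matrix.smul_mul, Matrix.mul_assoc, mulVec_smul,
      smul_mulVec, Matrix.mul_add, Matrix.mul_smul, add_mulVec, smul_smul]
    congr 2
    field_simp
  rw [hI, eA, eB, ← Pi.add_apply, key, sub_mulVec, one_mulVec, Pi.sub_apply]
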